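/- The ℤ₃[A₄]-lattice L₃(ℤ₃) is a projective ℤ₃[A₄]-module. -/

import Mathlib

/-- `A₄`, the alternating group on 4 letters. -/
abbrev A4 : Type := alternatingGroup (Fin 4)

/-- `a = (12)(34)` as an element of `A₄`. -/
def aP : A4 := ⟨Equiv.swap 0 1 * Equiv.swap 2 3, Equiv.Perm.mem_alternatingGroup.mpr (by decide)⟩
/-- `b = (13)(24)` as an element of `A₄`. -/
def bP : A4 := ⟨Equiv.swap 0 2 * Equiv.swap 1 3, Equiv.Perm.mem_alternatingGroup.mpr (by decide)⟩
/-- `c = (14)(23)` as an element of `A₄`. -/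
def cP : A4 := ⟨Equiv.swap 0 3 * Equiv.swap 1 2, Equiv.Perm.mem_alternatingGroup.mpr (by decide)⟩

/-- The Klein four subgroup `V₄ = {1, (12)(34), (13)(24), (14)(23)}` of `A₄`. -/
def V4 : Subgroup A4 where
  carrier := {1, aP, bP, cP}
  one_mem' := Or.inl rfl
  mul_mem' := by
    intro a b ha hb
    simp only [Set.mem_insert_iff, Set.mem_singleton_iff] at *
    revert ha hb; revert a b
    decide
  inv_mem' := by
    intro a ha
    simp only [Set.mem_insert_iff, Set.mem_singleton_iff] at *
    revert ha; revert a
    decide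

/-- The 3-cycle `(123)` (acting as `0 ↦ 1 ↦ 2 ↦ 0`), generating the complement `C₃` in
`A₄ = V₄ ⋊ C₃`. -/
def sigma3 : A4 :=
  ⟨Equiv.swap 0 1 * Equiv.swap 1 2, Equiv.Perm.mem_alternatingGroup.mpr (by decide)⟩

/-- The three double transpositions of `V₄ ∖ {1}`, indexing the basis of `L₃`. -/
def tIdx : Fin 3 → A4 := ![aP, bP, cP]

/-- The index of the conjugate `g t g⁻¹` of a double transposition `t`. -/
def conjIdx (g : A4) (i : Fin 3) : Fin 3 :=
  if g * tIdx i * g⁻¹ = aP then 0 else if g * tIdx i * g⁻¹ = bP then 1 else 2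

/-- The exponent `k` such that `g ∈ V₄ · σ^k` in the decomposition `A₄ = V₄ ⋊ ⟨σ⟩`. -/
def kExp (g : A4) : ℕ :=
  if g * aP * g⁻¹ = aP then 0
  else if g * aP * g⁻¹ = sigma3 * aP * sigma3⁻¹ then 1 else 2

/-- The `V₄`-part `v` of the decomposition `g = v · σ^k`. -/
def vPart (g : A4) : A4 := g * (sigma3 ^ kExp g)⁻¹

/-- The sign `χ_t(v)` with which `g = v·h` acts on the basis vector `e_t`, where
`χ_t : V₄ → {±1}` is the character with kernel `{1, t}`: the coefficient produced on the
target basis vector `e_{hth⁻¹}` is `χ_t(v)`, i.e. the coefficient of the monomial matrix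
in column `t` is `χ_{hth⁻¹}(v) = χ_t(h⁻¹vh)`. -/
def epsSign (g : A4) (i : Fin 3) : ℤ :=
  if vPart g = 1 ∨ vPart g = tIdx (conjIdx g i) then 1 else -1

/-- The integral monomial matrix of `g` acting on `L₃`: `(v·h) · e_t = χ_t(v) · e_{hth⁻¹}`. -/
def L3IntMat (g : A4) : Matrix (Fin 3) (Fin 3) ℤ :=
  Matrix.of fun j i => if j = conjIdx g i then epsSign g i else 0

set_option maxRecDepth 10000 in
lemma L3IntMat_one : L3IntMat 1 = 1 := by decide

set_option maxRecDepth 100000 in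
lemma L3IntMat_mul : ∀ g h : A4, L3IntMat (g * h) = L3IntMat g * L3IntMat h := by decide

/-- The lattice `L₃(R)`, free of rank 3 over `R` with basis `(e_t)` indexed by the three
double transpositions `t ∈ V₄ ∖ {1}`: writing `A₄ = V₄ ⋊ C₃` with `C₃ = ⟨(123)⟩`, the
element `v·h` acts by `(v·h) · e_t = χ_t(v) · e_{hth⁻¹}`. -/
def L3Rep (R : Type*) [CommRing R] : Representation R A4 (Fin 3 → R) where
  toFun g := ((L3IntMat g).map (Int.castRingHom R)).mulVecLin
  map_one' := by
    rw [L3IntMat_one, Matrix.map_one _ (map_zero _) (map_one _), Matrix.mulVecLin_one]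
    rfl
  map_mul' g h := by
    rw [L3IntMat_mul, Matrix.map_mul, Matrix.mulVecLin_mul]
    rfl

namespace L3Aux

/-- Coset representatives: `sk i` conjugates `aP` to `tIdx i`. -/
def sk : Fin 3 → A4 := ![1, sigma3 * sigma3, sigma3]

/-- Integer coefficient matrix of the equivariant embedding `L₃ → ℤ[A₄]`:
`Cc g i` is the coefficient of `g` in `ξ_i = sk i · ∑_{v∈V₄} χ_a(v) v`. -/
def Cc (g : A4) (i : Fin 3) : ℤ :=
  if (sk i)⁻¹ * g = 1 ∨ (sk i)⁻¹ * g = aP then 1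
  else if (sk i)⁻¹ * g = bP ∨ (sk i)⁻¹ * g = cP then -1 else 0

set_option maxRecDepth 1000000 in
lemma fact1 : ∀ (g h : A4) (k : Fin 3),
    (∑ j, Cc h j * L3IntMat g j k) = Cc (g⁻¹ * h) k := by decide

set_option maxRecDepth 1000000 in
lemma fact2 : ∀ i k : Fin 3,
    (∑ h : A4, Cc h i * L3IntMat h k 0) = if i = k then 4 else 0 := by decide

abbrev M3 : Type := MonoidAlgebra ℤ_[3] A4

lemma isUnit4 : IsUnit (4 : ℤ_[3]) := by
  rw [PadicInt.isUnit_iff]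
  refine le_antisymm (PadicInt.norm_le_one _) (not_lt.mp ?_)
  have h : ((4 : ℤ) : ℤ_[3]) = (4 : ℤ_[3]) := by push_cast; ring
  rw [← h, PadicInt.norm_int_lt_one_iff_dvd]
  norm_num

noncomputable def inv4 : ℤ_[3] := ↑isUnit4.unit⁻¹

lemma mul_inv4 : (4 : ℤ_[3]) * inv4 = 1 := isUnit4.mul_val_inv

/-- The target vector `w₀ = ¼ e₀`. -/
noncomputable def w0 : Fin 3 → ℤ_[3] := fun k => if k = 0 then inv4 else 0

/-- The underlying function of the equivariant embedding. -/
noncomputable def iFun (x : Fin 3 → ℤ_[3]) : M3 :=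
  ∑ h : A4, MonoidAlgebra.single h (∑ j, (Cc h j : ℤ_[3]) * x j)

lemma rho_apply (g : A4) (x : Fin 3 → ℤ_[3]) (j : Fin 3) :
    (L3Rep ℤ_[3]) g x j = ∑ k, ((L3IntMat g j k : ℤ) : ℤ_[3]) * x k := by
  simp [L3Rep, Matrix.mulVecLin_apply, Matrix.mulVec, dotProduct, Matrix.map_apply]

lemma iFun_zero : iFun 0 = 0 := by
  simp [iFun]

lemma iFun_add (x y : Fin 3 → ℤ_[3]) : iFun (x + y) = iFun x + iFun y := by
  unfold iFun
  rw [← Finset.sum_add_distrib]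
  refine Finset.sum_congr rfl fun h _ => ?_
  rw [← MonoidAlgebra.single_add]
  congr 1
  rw [← Finset.sum_add_distrib]
  exact Finset.sum_congr rfl fun j _ => by rw [Pi.add_apply]; ring

lemma iFun_smul (c : ℤ_[3]) (x : Fin 3 → ℤ_[3]) : iFun (c • x) = c • iFun x := by
  unfold iFun
  rw [Finset.smul_sum]
  refine Finset.sum_congr rfl fun h _ => ?_
  rw [MonoidAlgebra.smul_single', Finset.mul_sum]
  congr 1
  refine Finset.sum_congr rfl fun j _ => ?_
  rw [Pi.smul_apply, smul_eq_mul]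
  ring

lemma iFun_rho (g : A4) (x : Fin 3 → ℤ_[3]) :
    iFun ((L3Rep ℤ_[3]) g x) = MonoidAlgebra.single g 1 * iFun x := by
  have hL : iFun ((L3Rep ℤ_[3]) g x) =
      ∑ h : A4, MonoidAlgebra.single h (∑ k, ((Cc (g⁻¹ * h) k : ℤ) : ℤ_[3]) * x k) := by
    unfold iFun
    refine Finset.sum_congr rfl fun h _ => ?_
    congr 1
    calc ∑ j, (Cc h j : ℤ_[3]) * (L3Rep ℤ_[3]) g x j
        = ∑ j, ∑ k, ((Cc h j * L3IntMat g j k : ℤ) : ℤ_[3]) * x k := by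
          refine Finset.sum_congr rfl fun j _ => ?_
          rw [rho_apply, Finset.mul_sum]
          refine Finset.sum_congr rfl fun k _ => ?_
          push_cast; ring
      _ = ∑ k, ((∑ j, Cc h j * L3IntMat g j k : ℤ) : ℤ_[3]) * x k := by
          rw [Finset.sum_comm]
          refine Finset.sum_congr rfl fun k _ => ?_
          rw [Int.cast_sum, Finset.sum_mul]
      _ = ∑ k, ((Cc (g⁻¹ * h) k : ℤ) : ℤ_[3]) * x k := by
          simp only [fact1]
  rw [hL]
  unfold iFun
  rw [Finset.mul_sum]
  refine Eq.symm (Fintype.sum_equiv (Equiv.mulLeft g) _ _ fun h => ?_)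
  rw [MonoidAlgebra.single_mul_single, one_mul]
  simp [inv_mul_cancel_left]

lemma iFun_module (a : M3) (y : Fin 3 → ℤ_[3]) :
    iFun ((L3Rep ℤ_[3]).asAlgebraHom a y) = a * iFun y := by
  induction a using MonoidAlgebra.induction_linear with
  | zero => simp [iFun_zero]
  | add f g hf hg =>
      rw [map_add, LinearMap.add_apply, iFun_add, hf, hg, add_mul]
  | single g c =>
      rw [Representation.asAlgebraHom_single, LinearMap.smul_apply, iFun_smul, iFun_rho,
        ← smul_mul_assoc, MonoidAlgebra.smul_single', mul_one]

lemma key3 (x : Fin 3 → ℤ_[3]) :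
    (L3Rep ℤ_[3]).asAlgebraHom (iFun x) w0 = x := by
  have h1 : (L3Rep ℤ_[3]).asAlgebraHom (iFun x) =
      ∑ h : A4, (∑ j, (Cc h j : ℤ_[3]) * x j) • ((L3Rep ℤ_[3]) h : Module.End ℤ_[3] (Fin 3 → ℤ_[3])) := by
    rw [iFun, map_sum]
    exact Finset.sum_congr rfl fun h _ => Representation.asAlgebraHom_single _ _ _
  funext k
  have h2 : ∀ h : A4, (L3Rep ℤ_[3]) h w0 k = ((L3IntMat h k 0 : ℤ) : ℤ_[3]) * inv4 := by
    intro h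
    rw [rho_apply]
    simp [w0, Fin.sum_univ_three]
  rw [h1]
  simp only [LinearMap.coe_sum, LinearMap.smul_apply, Finset.sum_apply, Pi.smul_apply,
    smul_eq_mul, h2]
  calc ∑ h : A4, (∑ j, (Cc h j : ℤ_[3]) * x j) * (((L3IntMat h k 0 : ℤ) : ℤ_[3]) * inv4)
      = ∑ h : A4, ∑ j, ((Cc h j * L3IntMat h k 0 : ℤ) : ℤ_[3]) * x j * inv4 := by
        refine Finset.sum_congr rfl fun h _ => ?_
        rw [Finset.sum_mul]
        refine Finset.sum_congr rfl fun j _ => ?_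
        push_cast; ring
    _ = ∑ j, (∑ h : A4, ((Cc h j * L3IntMat h k 0 : ℤ) : ℤ_[3])) * x j * inv4 := by
        rw [Finset.sum_comm]
        refine Finset.sum_congr rfl fun j _ => ?_
        rw [Finset.sum_mul, Finset.sum_mul]
    _ = ∑ j, ((if j = k then (4 : ℤ) else 0 : ℤ) : ℤ_[3]) * x j * inv4 := by
        refine Finset.sum_congr rfl fun j _ => ?_
        rw [← Int.cast_sum, fact2]
    _ = x k := by
        rw [Finset.sum_eq_single k]
        · rw [if_pos rfl]
          push_cast
          rw [mul_comm ((4 : ℤ_[3])) (x k), mul_assoc, mul_inv4, mul_one]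
        · intro j _ hj
          rw [if_neg hj]
          push_cast
          ring
        · intro hk
          exact absurd (Finset.mem_univ k) hk

noncomputable def iLin : (L3Rep ℤ_[3]).asModule →ₗ[M3] M3 where
  toFun x := iFun ((L3Rep ℤ_[3]).asModuleEquiv x)
  map_add' x y := by rw [map_add, iFun_add]
  map_smul' a x := by
    exact iFun_module a ((L3Rep ℤ_[3]).asModuleEquiv x)

noncomputable def w0' : (L3Rep ℤ_[3]).asModule := (L3Rep ℤ_[3]).asModuleEquiv.symm w0

noncomputable def sLin : M3 →ₗ[M3] (L3Rep ℤ_[3]).asModule where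
  toFun a := a • w0'
  map_add' a b := add_smul a b w0'
  map_smul' a b := mul_smul a b w0'

end L3Aux

/-- The `ℤ₃[A₄]`-lattice `L₃(ℤ₃)` is a projective `ℤ₃[A₄]`-module. -/
theorem L3_Z3_projective :
    Module.Projective (MonoidAlgebra ℤ_[3] A4) (L3Rep ℤ_[3]).asModule := by
  refine Module.Projective.of_split L3Aux.iLin L3Aux.sLin ?_
  apply LinearMap.ext
  intro x
  exact L3Aux.key3 ((L3Rep ℤ_[3]).asModuleEquiv x)
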